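/- Let b₀ > 0, q ∈ ℝ, and define p(t) = (1/2)((1 - q²/b₀²) cos(b₀ t) + 2(q/b₀) sin(b₀ t) + 1 + q²/b₀²). Then p(t) ≥ 0 for all t ∈ ℝ, and p(t) = 0 if and only if cos(b₀ t) = (q² - b₀²)/(q² + b₀²) and q·sin(b₀ t) ≤ 0. -/

import Mathlib

theorem stmt3 (b₀ q : ℝ) (hb : 0 < b₀) :
    ∀ t : ℝ,
      0 ≤ (1 / 2) * ((1 - q ^ 2 / b₀ ^ 2) * Real.cos (b₀ * t)
          + 2 * (q / b₀) * Real.sin (b₀ * t) + 1 + q ^ 2 / b₀ ^ 2) ∧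
      ((1 / 2) * ((1 - q ^ 2 / b₀ ^ 2) * Real.cos (b₀ * t)
          + 2 * (q / b₀) * Real.sin (b₀ * t) + 1 + q ^ 2 / b₀ ^ 2) = 0 ↔
        (Real.cos (b₀ * t) = (q ^ 2 - b₀ ^ 2) / (q ^ 2 + b₀ ^ 2) ∧
          q * Real.sin (b₀ * t) ≤ 0)) := by
  intro t
  set S := Real.sin (b₀ * t / 2) with hS
  set C := Real.cos (b₀ * t / 2) with hC
  have hc : Real.cos (b₀ * t) = 2 * C ^ 2 - 1 := by
    have := Real.cos_two_mul (b₀ * t / 2)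
    rw [show 2 * (b₀ * t / 2) = b₀ * t by ring] at this
    linarith
  have hs : Real.sin (b₀ * t) = 2 * S * C := by
    have := Real.sin_two_mul (b₀ * t / 2)
    rw [show 2 * (b₀ * t / 2) = b₀ * t by ring] at this
    linarith [this]
  have hp : S ^ 2 + C ^ 2 = 1 := Real.sin_sq_add_cos_sq _
  have hb2 : (0:ℝ) < b₀ ^ 2 := by positivity
  have hb0 : b₀ ≠ 0 := ne_of_gt hb
  have hden : (0:ℝ) < q ^ 2 + b₀ ^ 2 := by positivity
  have key : (1 / 2) * ((1 - q ^ 2 / b₀ ^ 2) * Real.cos (b₀ * t)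
      + 2 * (q / b₀) * Real.sin (b₀ * t) + 1 + q ^ 2 / b₀ ^ 2)
      = (b₀ * C + q * S) ^ 2 / b₀ ^ 2 := by
    rw [hc, hs]
    field_simp
    linear_combination (-2 * q ^ 2) * hp
  rw [key]
  refine ⟨by positivity, ?_, ?_⟩
  · intro hE
    have h0 : b₀ * C + q * S = 0 := by
      have h2 : (b₀ * C + q * S) ^ 2 = 0 := by
        field_simp at hE
        nlinarith [hE, sq_nonneg (b₀ * C + q * S)]
      exact pow_eq_zero_iff (n := 2) (by norm_num) |>.mp h2
    have hq : (q * S) ^ 2 = (b₀ * C) ^ 2 := by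
      rw [show q * S = -(b₀ * C) by linarith]; ring
    constructor
    · rw [hc, eq_div_iff (ne_of_gt hden)]
      linear_combination (2 * q ^ 2) * hp - 2 * hq
    · rw [hs]
      have h1 : q * (2 * S * C) = -2 * b₀ * C ^ 2 := by
        linear_combination (2 * C) * h0
      nlinarith [sq_nonneg C, hb]
  · rintro ⟨hcos, hqs⟩
    rw [hc, eq_div_iff (ne_of_gt hden)] at hcos
    rw [hs] at hqs
    have hC2 : C ^ 2 * (q ^ 2 + b₀ ^ 2) = q ^ 2 := by linarith [hcos]
    have hS2 : S ^ 2 * (q ^ 2 + b₀ ^ 2) = b₀ ^ 2 := by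
      linear_combination (q ^ 2 + b₀ ^ 2) * hp - hC2
    have hprod : (q * (2 * S * C) * (q ^ 2 + b₀ ^ 2) + 2 * q ^ 2 * b₀) *
        (q * (2 * S * C) * (q ^ 2 + b₀ ^ 2) - 2 * q ^ 2 * b₀) = 0 := by
      linear_combination (4 * q ^ 2 * C ^ 2 * (q ^ 2 + b₀ ^ 2)) * hS2
        + (4 * q ^ 2 * b₀ ^ 2) * hC2
    have hle : q * (2 * S * C) * (q ^ 2 + b₀ ^ 2) ≤ 0 :=
      mul_nonpos_of_nonpos_of_nonneg hqs (le_of_lt hden)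
    have hval : q * (2 * S * C) * (q ^ 2 + b₀ ^ 2) = -(2 * q ^ 2 * b₀) := by
      rcases mul_eq_zero.mp hprod with h | h
      · linarith
      · linarith [mul_nonneg (sq_nonneg q) hb.le]
    have hsqd : (b₀ * C + q * S) ^ 2 * (q ^ 2 + b₀ ^ 2) = 0 := by
      linear_combination b₀ ^ 2 * hC2 + q ^ 2 * hS2 + b₀ * hval
    have hsq : (b₀ * C + q * S) ^ 2 = 0 :=
      (mul_eq_zero.mp hsqd).resolve_right (ne_of_gt hden)
    rw [hsq]
    simp
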